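/- Let N ≥ 1 and let u₁,…,u_N, η₁,…,η_N : ℝ² → ℝ be smooth functions of (x,t) satisfying ∂_t u_i = ∂_x[u_i²/2 + Σ_{k=1}^N η_k] and ∂_t η_i = ∂_x(u_i η_i) for every i. Let Ω := {(x,t,p) ∈ ℝ³ : p ≠ u_k(x,t) for all k} and define λ : Ω → ℝ by λ(x,t,p) := p + Σ_{k=1}^N η_k(x,t)/(p − u_k(x,t)), and A₀ := Σ_{k=1}^N η_k. Then on Ω: ∂_t λ = p ∂_x λ − (∂_p λ) ∂_x A₀; equivalently, λ satisfies λ_t − μ λ_x = (∂λ/∂μ)[μ_t − ∂_x(μ²/2 + A₀)] with μ = p an independent variable. -/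

import Mathlib

open Real Set

/-- Partial derivative in the first variable of a function of `(x, t, p)`. -/
noncomputable def pX (f : ℝ → ℝ → ℝ → ℝ) (x t p : ℝ) : ℝ := deriv (fun x' => f x' t p) x

/-- Partial derivative in the second variable of a function of `(x, t, p)`. -/
noncomputable def pT (f : ℝ → ℝ → ℝ → ℝ) (x t p : ℝ) : ℝ := deriv (fun t' => f x t' p) t

/-- Partial derivative in the third variable of a function of `(x, t, p)`. -/
noncomputable def pP (f : ℝ → ℝ → ℝ → ℝ) (x t p : ℝ) : ℝ := deriv (fun p' => f x t p') p

/-- The Riemann surface `λ = p + Σ η_k/(p − u_k)` of the Zakharov reduction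
satisfies the kinetic equation `λₜ = p λₓ − λ_p ∂ₓ A₀` on
`Ω = {(x,t,p) : p ≠ u_k(x,t) for all k}`, where `A₀ = Σ η_k`. -/
lemma sliceX {f : ℝ → ℝ → ℝ} (hf : ContDiff ℝ (⊤ : ℕ∞) (Function.uncurry f)) (x t : ℝ) :
    DifferentiableAt ℝ (fun x' => f x' t) x := by
  have h : DifferentiableAt ℝ (fun x' : ℝ => (x', t)) x :=
    differentiableAt_id.prodMk (differentiableAt_const t)
  exact DifferentiableAt.comp x
    ((hf.differentiable (by simp)) (x, t)) h

lemma sliceT {f : ℝ → ℝ → ℝ} (hf : ContDiff ℝ (⊤ : ℕ∞) (Function.uncurry f)) (x t : ℝ) :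
    DifferentiableAt ℝ (fun t' => f x t') t := by
  have h : DifferentiableAt ℝ (fun t' : ℝ => (x, t')) t :=
    (differentiableAt_const x).prodMk differentiableAt_id
  have := DifferentiableAt.comp (𝕜 := ℝ) t
    ((hf.differentiable (by simp)) ((x, t) : ℝ × ℝ)) h
  exact this

theorem zakharov_riemann_surface_kinetic_equation
    (N : ℕ) (hN : 1 ≤ N) (u η : Fin N → ℝ → ℝ → ℝ)
    (hu : ∀ i, ContDiff ℝ (⊤ : ℕ∞) (Function.uncurry (u i)))
    (hη : ∀ i, ContDiff ℝ (⊤ : ℕ∞) (Function.uncurry (η i)))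
    (h1 : ∀ (i : Fin N) (x t : ℝ),
      deriv (fun t' => u i x t') t
        = deriv (fun x' => (u i x' t) ^ 2 / 2 + ∑ k, η k x' t) x)
    (h2 : ∀ (i : Fin N) (x t : ℝ),
      deriv (fun t' => η i x t') t = deriv (fun x' => u i x' t * η i x' t) x)
    (L : ℝ → ℝ → ℝ → ℝ)
    (hL : ∀ x t p : ℝ, L x t p = p + ∑ k, η k x t / (p - u k x t))
    (A0 : ℝ → ℝ → ℝ) (hA0 : ∀ x t : ℝ, A0 x t = ∑ k, η k x t) :
    ∀ x t p : ℝ, (∀ k : Fin N, p ≠ u k x t) →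
      pT L x t p = p * pX L x t p - pP L x t p * deriv (fun x' => A0 x' t) x := by
  intro x t p hp
  have hudx : ∀ i, DifferentiableAt ℝ (fun x' => u i x' t) x := fun i => sliceX (hu i) x t
  have hudt : ∀ i, DifferentiableAt ℝ (fun t' => u i x t') t := fun i => sliceT (hu i) x t
  have hedx : ∀ i, DifferentiableAt ℝ (fun x' => η i x' t) x := fun i => sliceX (hη i) x t
  have hedt : ∀ i, DifferentiableAt ℝ (fun t' => η i x t') t := fun i => sliceT (hη i) x t
  have hden : ∀ k, p - u k x t ≠ 0 := fun k => sub_ne_zero.mpr (hp k)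
  set S : ℝ := ∑ k, deriv (fun x' => η k x' t) x with hS
  -- deriv of A0 in x
  have hA0x : deriv (fun x' => A0 x' t) x = S := by
    have h : (fun x' => A0 x' t) = fun x' => ∑ k, η k x' t := by
      funext x'; exact hA0 x' t
    rw [h]
    exact (HasDerivAt.fun_sum (fun k _ => (hedx k).hasDerivAt)).deriv
  -- pX
  have hXk : ∀ k : Fin N, HasDerivAt (fun x' => η k x' t / (p - u k x' t))
      ((deriv (fun x' => η k x' t) x * (p - u k x t) -
        η k x t * (0 - deriv (fun x' => u k x' t) x)) / (p - u k x t) ^ 2) x :=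
    fun k => ((hedx k).hasDerivAt).div
      (((hasDerivAt_const x p).sub (hudx k).hasDerivAt)) (hden k)
  have hX : pX L x t p = ∑ k, (deriv (fun x' => η k x' t) x * (p - u k x t) -
      η k x t * (0 - deriv (fun x' => u k x' t) x)) / (p - u k x t) ^ 2 := by
    have h : (fun x' => L x' t p) = fun x' => p + ∑ k, η k x' t / (p - u k x' t) := by
      funext x'; exact hL x' t p
    rw [pX, h]
    exact ((HasDerivAt.fun_sum (fun k _ => hXk k)).const_add p).deriv
  -- pT
  have hTk : ∀ k : Fin N, HasDerivAt (fun t' => η k x t' / (p - u k x t'))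
      ((deriv (fun t' => η k x t') t * (p - u k x t) -
        η k x t * (0 - deriv (fun t' => u k x t') t)) / (p - u k x t) ^ 2) t :=
    fun k => ((hedt k).hasDerivAt).div
      (((hasDerivAt_const t p).sub (hudt k).hasDerivAt)) (hden k)
  have hT : pT L x t p = ∑ k, (deriv (fun t' => η k x t') t * (p - u k x t) -
      η k x t * (0 - deriv (fun t' => u k x t') t)) / (p - u k x t) ^ 2 := by
    have h : (fun t' => L x t' p) = fun t' => p + ∑ k, η k x t' / (p - u k x t') := by
      funext t'; exact hL x t' p
    rw [pT, h]
    exact ((HasDerivAt.fun_sum (fun k _ => hTk k)).const_add p).deriv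
  -- pP
  have hPk : ∀ k : Fin N, HasDerivAt (fun p' => η k x t / (p' - u k x t))
      ((0 * (p - u k x t) - η k x t * 1) / (p - u k x t) ^ 2) p :=
    fun k => (hasDerivAt_const p (η k x t)).div
      ((hasDerivAt_id p).sub_const (u k x t)) (hden k)
  have hP : pP L x t p = 1 + ∑ k, (0 * (p - u k x t) - η k x t * 1) / (p - u k x t) ^ 2 := by
    have h : (fun p' => L x t p') = fun p' => p' + ∑ k, η k x t / (p' - u k x t) := by
      funext p'; exact hL x t p'
    rw [pP, h]
    exact ((hasDerivAt_id p).add (HasDerivAt.fun_sum (fun k _ => hPk k))).deriv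
  -- expand h1: u_t = u * u_x + S
  have hut : ∀ i : Fin N, deriv (fun t' => u i x t') t
      = u i x t * deriv (fun x' => u i x' t) x + S := by
    intro i
    rw [h1 i x t]
    have hd : HasDerivAt (fun x' => (u i x' t) ^ 2 / 2 + ∑ k, η k x' t)
        ((2 : ℕ) * (u i x t) ^ 1 * deriv (fun x' => u i x' t) x / 2 + S) x :=
      (((hudx i).hasDerivAt.pow 2).div_const 2).add
        (HasDerivAt.fun_sum (fun k _ => (hedx k).hasDerivAt))
    rw [hd.deriv]
    ring
  -- expand h2: η_t = u_x η + u η_x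
  have het : ∀ i : Fin N, deriv (fun t' => η i x t') t
      = deriv (fun x' => u i x' t) x * η i x t
        + u i x t * deriv (fun x' => η i x' t) x := by
    intro i
    rw [h2 i x t]
    exact ((hudx i).hasDerivAt.mul (hedx i).hasDerivAt).deriv
  -- final algebra
  rw [hT, hX, hP, hA0x]
  rw [Finset.mul_sum, add_mul, one_mul, Finset.sum_mul]
  have hrhs : S + ∑ i, (0 * (p - u i x t) - η i x t * 1) / (p - u i x t) ^ 2 * S
      = ∑ i, (deriv (fun x' => η i x' t) x
          + (0 * (p - u i x t) - η i x t * 1) / (p - u i x t) ^ 2 * S) := by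
    rw [Finset.sum_add_distrib, ← hS]
  rw [hrhs, ← Finset.sum_sub_distrib]
  refine Finset.sum_congr rfl (fun k _ => ?_)
  rw [hut k, het k]
  have h0 := hden k
  field_simp
  ring
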